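/- Suppose ε, β, γ, ρ, I₀ with ε, β, γ > 0 and I₀ ≤ β/γ satisfy Condition C2. Then for each α ∈ [0,1] the algebraic system 0 = (1 − ρ²/2)X̃₂(α) − X̃₂(α)³/3 − Ỹ₂(α) + αI₀, 0 = X̃₂(α) − γỸ₂(α) + β has a unique solution (X̃₂(α), Ỹ₂(α)), and the following hold: (i) X̃₂(α)² > 1 − ρ²/2 for every α ∈ [0,1]; (ii) the functions α ↦ X̃₂(α) and α ↦ Ỹ₂(α) are continuous on [0,1] and differentiable on (0,1) (with one-sided derivatives at α = 0 and α = 1); (iii) on (0,1) the derivatives satisfy X̃₂′(α) = I₀/(X̃₂(α)² − 1 + 1/γ + ρ²/2) and Ỹ₂′(α) = (1/γ)·X̃₂′(α), with X̃₂(α)² − 1 + ρ²/2 + 1/γ > 1/γ > 0 for all α ∈ [0,1]. -/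

import Mathlib

open Set
open Filter Topology

lemma aux_cubic_pos (c₁ c₀ x : ℝ) :
    ∃ b < x, -b^3/3 + c₁*b + c₀ > 0 := by
  obtain ⟨M, hM⟩ : ∃ M : ℝ, M = |c₁| + |c₀| + |x| + 6 := ⟨_, rfl⟩
  have h1 := le_abs_self c₁; have h2 := neg_abs_le c₁
  have h3 := le_abs_self c₀; have h4 := neg_abs_le c₀
  have h5 := neg_abs_le x
  have h6 := abs_nonneg c₁; have h7 := abs_nonneg c₀; have h8 := abs_nonneg x
  refine ⟨-M, by rw [hM]; linarith, ?_⟩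
  have hM6 : M ≥ 6 := by rw [hM]; linarith
  have hM0 : (0:ℝ) ≤ M := by linarith
  have hc1 : |c₁| ≤ M - 6 := by rw [hM]; linarith
  have hc0 : |c₀| ≤ M - 6 := by rw [hM]; linarith
  have k1 : c₁ * M ≤ |c₁| * M := mul_le_mul_of_nonneg_right h1 hM0
  have k2 : |c₁| * M ≤ (M - 6) * M := mul_le_mul_of_nonneg_right hc1 hM0
  have k3 : (0:ℝ) ≤ M^2 * (M - 6) := mul_nonneg (sq_nonneg M) (by linarith)
  have k3' : 6 * M^2 ≤ M^3 := by nlinarith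
  have expand : -(-M)^3/3 + c₁*(-M) + c₀ = M^3/3 - c₁*M + c₀ := by ring
  rw [expand]
  have k2' : c₁ * M ≤ M^2 - 6*M := by nlinarith
  linarith [sq_nonneg M]

lemma aux_cubic_neg (c₁ c₀ x : ℝ) :
    ∃ b > x, -b^3/3 + c₁*b + c₀ < 0 := by
  obtain ⟨b, hb, hb2⟩ := aux_cubic_pos (c₁) (-c₀) (-x)
  refine ⟨-b, by linarith, by nlinarith⟩

lemma aux_unique_root_sign (c₁ c₀ z : ℝ)
    (hu : ∀ x : ℝ, -x^3/3 + c₁*x + c₀ = 0 → x = z) :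
    ∀ x : ℝ, (x < z → -x^3/3 + c₁*x + c₀ > 0) ∧ (z < x → -x^3/3 + c₁*x + c₀ < 0) := by
  set f : ℝ → ℝ := fun x => -x^3/3 + c₁*x + c₀ with hf
  have hcont : Continuous f := by fun_prop
  intro x
  constructor
  · intro hx
    by_contra h
    push_neg at h
    have hne : f x ≠ 0 := fun h0 => absurd (hu x h0) (ne_of_lt hx)
    have hlt : f x < 0 := lt_of_le_of_ne h hne
    obtain ⟨b, hb, hbp⟩ := aux_cubic_pos c₁ c₀ x
    have : (0:ℝ) ∈ Icc (f x) (f b) := ⟨le_of_lt hlt, le_of_lt hbp⟩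
    have := intermediate_value_Icc' (le_of_lt hb) hcont.continuousOn this
    obtain ⟨z', hz', hz'0⟩ := this
    have := hu z' hz'0
    subst this
    exact absurd hz'.2 (not_le.2 hx)
  · intro hx
    by_contra h
    push_neg at h
    have hne : f x ≠ 0 := fun h0 => absurd (hu x h0) (ne_of_gt hx)
    have hgt : f x > 0 := lt_of_le_of_ne h (Ne.symm hne)
    obtain ⟨b, hb, hbn⟩ := aux_cubic_neg c₁ c₀ x
    have : (0:ℝ) ∈ Icc (f b) (f x) := ⟨le_of_lt hbn, le_of_lt hgt⟩
    have := intermediate_value_Icc' (le_of_lt hb) hcont.continuousOn this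
    obtain ⟨z', hz', hz'0⟩ := this
    have := hu z' hz'0
    subst this
    exact absurd hz'.1 (not_le.2 hx)



/-- Condition C2: for every `σ ∈ [0,1]` the system
`v' = (1 − ρ²/2)v − v³/3 − w + σI₀`, `w' = ε(v − γw + β)` has a unique equilibrium,
this equilibrium is stable (negative trace and positive determinant of the
linearization `[[1 − ρ²/2 − v₀², −1],[ε, −εγ]]`), and there is `c > 0` with
`v₀(σ)² − 1 + ρ²/2 > c` uniformly in `σ`. -/
def CondC2 (ε β γ ρ I₀ : ℝ) : Prop :=
  (∀ σ ∈ Icc (0:ℝ) 1, ∃! p : ℝ × ℝ,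
    (1 - ρ ^ 2 / 2) * p.1 - p.1 ^ 3 / 3 - p.2 + σ * I₀ = 0 ∧ p.1 - γ * p.2 + β = 0) ∧
  (∀ σ ∈ Icc (0:ℝ) 1, ∀ p : ℝ × ℝ,
    ((1 - ρ ^ 2 / 2) * p.1 - p.1 ^ 3 / 3 - p.2 + σ * I₀ = 0 ∧ p.1 - γ * p.2 + β = 0) →
    (1 - ρ ^ 2 / 2 - p.1 ^ 2) - ε * γ < 0 ∧
    (1 - ρ ^ 2 / 2 - p.1 ^ 2) * (-(ε * γ)) + ε > 0) ∧
  (∃ c > (0:ℝ), ∀ σ ∈ Icc (0:ℝ) 1, ∀ p : ℝ × ℝ,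
    ((1 - ρ ^ 2 / 2) * p.1 - p.1 ^ 3 / 3 - p.2 + σ * I₀ = 0 ∧ p.1 - γ * p.2 + β = 0) →
    p.1 ^ 2 - 1 + ρ ^ 2 / 2 > c)

/-- **Lemma (Properties of the algebraic system, steering problem 2).** -/
theorem stmt_7 (ε β γ ρ I₀ : ℝ) (hε : 0 < ε) (hβ : 0 < β) (hγ : 0 < γ)
    (hI₀ : I₀ ≤ β / γ) (hC2 : CondC2 ε β γ ρ I₀) :
    (∀ α ∈ Icc (0:ℝ) 1, ∃! p : ℝ × ℝ,
      (1 - ρ ^ 2 / 2) * p.1 - p.1 ^ 3 / 3 - p.2 + α * I₀ = 0 ∧ p.1 - γ * p.2 + β = 0) ∧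
    ∀ X Y : ℝ → ℝ,
      (∀ α ∈ Icc (0:ℝ) 1,
        (1 - ρ ^ 2 / 2) * X α - X α ^ 3 / 3 - Y α + α * I₀ = 0 ∧ X α - γ * Y α + β = 0) →
      (∀ α ∈ Icc (0:ℝ) 1, X α ^ 2 > 1 - ρ ^ 2 / 2) ∧
      ContinuousOn X (Icc 0 1) ∧ ContinuousOn Y (Icc 0 1) ∧
      (∀ α ∈ Icc (0:ℝ) 1, DifferentiableWithinAt ℝ X (Icc (0:ℝ) 1) α ∧
        DifferentiableWithinAt ℝ Y (Icc (0:ℝ) 1) α) ∧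
      (∀ α ∈ Ioo (0:ℝ) 1, ∃ dX dY : ℝ, HasDerivAt X dX α ∧ HasDerivAt Y dY α ∧
        dX = I₀ / (X α ^ 2 - 1 + 1 / γ + ρ ^ 2 / 2) ∧
        dY = (1 / γ) * dX) ∧
      (∀ α ∈ Icc (0:ℝ) 1, X α ^ 2 - 1 + ρ ^ 2 / 2 + 1 / γ > 1 / γ ∧ (0:ℝ) < 1 / γ) := by
  have hγ0 : γ ≠ 0 := ne_of_gt hγ
  have hγinv : (0:ℝ) < 1/γ := by positivity
  obtain ⟨hEx, hStab, c, hc, hcb⟩ := hC2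
  refine ⟨hEx, ?_⟩
  intro X Y hXY
  have key : ∀ α ∈ Icc (0:ℝ) 1, X α ^ 2 - 1 + ρ^2/2 > c := fun α hα =>
    hcb α hα (X α, Y α) (hXY α hα)
  have keyL : ∀ α ∈ Icc (0:ℝ) 1, X α ^ 2 > 1 - ρ^2/2 := by
    intro α hα; have := key α hα; linarith
  have hYf : ∀ α ∈ Icc (0:ℝ) 1, Y α = (X α + β)/γ := by
    intro α hα
    have h2 := (hXY α hα).2
    field_simp
    linarith
  have hg : ∀ α ∈ Icc (0:ℝ) 1,
      -(X α)^3/3 + ((1 - ρ^2/2) - 1/γ) * X α + (α * I₀ - β/γ) = 0 := by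
    intro α hα
    have h1 := (hXY α hα).1
    rw [hYf α hα] at h1
    linear_combination h1
  have hu : ∀ α ∈ Icc (0:ℝ) 1, ∀ x : ℝ,
      -x^3/3 + ((1 - ρ^2/2) - 1/γ) * x + (α * I₀ - β/γ) = 0 → x = X α := by
    intro α hα x hx
    obtain ⟨p₀, hp₀, hp₀u⟩ := hEx α hα
    have hX : (X α, Y α) = p₀ := hp₀u _ (hXY α hα)
    have hxpair : ((x, (x+β)/γ) : ℝ × ℝ) = p₀ := by
      apply hp₀u
      refine ⟨?_, ?_⟩
      · show (1 - ρ^2/2) * x - x^3/3 - ((x+β)/γ) + α * I₀ = 0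
        linear_combination hx
      · show x - γ * ((x+β)/γ) + β = 0
        field_simp
        ring
    have hpp := hxpair.trans hX.symm
    exact (Prod.ext_iff.1 hpp).1
  have hsign : ∀ α ∈ Icc (0:ℝ) 1, ∀ x : ℝ,
      (x < X α → -x^3/3 + ((1 - ρ^2/2) - 1/γ) * x + (α * I₀ - β/γ) > 0) ∧
      (X α < x → -x^3/3 + ((1 - ρ^2/2) - 1/γ) * x + (α * I₀ - β/γ) < 0) :=
    fun α hα => aux_unique_root_sign _ _ _ (hu α hα)
  have hXneg : ∀ α ∈ Icc (0:ℝ) 1, X α ≤ 0 := by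
    intro α hα
    by_contra h
    push_neg at h
    have h0 := (hsign α hα 0).1 h
    have hβγ : 0 < β/γ := div_pos hβ hγ
    have hαI : α * I₀ ≤ β/γ := by
      nlinarith [mul_nonneg hα.1 (sub_nonneg.2 hI₀),
        mul_nonneg (sub_nonneg.2 hα.2) (le_of_lt hβγ)]
    norm_num at h0
    linarith
  have hS : ∀ α ∈ Icc (0:ℝ) 1, ∀ α' ∈ Icc (0:ℝ) 1,
      X α ^ 2 + X α * X α' + X α' ^ 2 ≥ 3 * (1 - ρ^2/2) := by
    intro α hα α' hα'
    have hx := keyL α hα; have hy := keyL α' hα'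
    have hxn := hXneg α hα; have hyn := hXneg α' hα'
    have hxy : 0 ≤ X α * X α' := by
      nlinarith [mul_nonneg (neg_nonneg.2 hxn) (neg_nonneg.2 hyn)]
    rcases le_or_gt (1 - ρ^2/2) 0 with hL | hL
    · nlinarith
    · have : X α * X α' > 1 - ρ^2/2 := by nlinarith
      linarith
  -- continuity of X within Icc
  have hXc : ∀ α₀ ∈ Icc (0:ℝ) 1, ContinuousWithinAt X (Icc (0:ℝ) 1) α₀ := by
    intro α₀ hα₀
    rw [Metric.continuousWithinAt_iff]
    intro ee hee
    have he0 : 0 < ee/2 := by positivity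
    have hp := (hsign α₀ hα₀ (X α₀ - ee/2)).1 (by linarith)
    have hn := (hsign α₀ hα₀ (X α₀ + ee/2)).2 (by linarith)
    obtain ⟨mA, hmA⟩ : ∃ m : ℝ, m = -(X α₀ - ee/2)^3/3 + ((1 - ρ^2/2) - 1/γ) * (X α₀ - ee/2)
        + (α₀ * I₀ - β/γ) := ⟨_, rfl⟩
    obtain ⟨mB, hmB⟩ : ∃ m : ℝ, m = -(X α₀ + ee/2)^3/3 + ((1 - ρ^2/2) - 1/γ) * (X α₀ + ee/2)
        + (α₀ * I₀ - β/γ) := ⟨_, rfl⟩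
    have hmA0 : 0 < mA := by rw [hmA]; exact hp
    have hmB0 : mB < 0 := by rw [hmB]; exact hn
    obtain ⟨m, hm⟩ : ∃ m : ℝ, m = min mA (-mB) := ⟨_, rfl⟩
    have hm0 : 0 < m := by rw [hm]; exact lt_min hmA0 (by linarith)
    have hmle1 : m ≤ mA := by rw [hm]; exact min_le_left _ _
    have hmle2 : m ≤ -mB := by rw [hm]; exact min_le_right _ _
    refine ⟨m/(|I₀|+1), by positivity, ?_⟩
    intro α hα hdist
    rw [Real.dist_eq] at hdist ⊢
    have habs : |α - α₀| * |I₀| < m := by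
      have hI1 : (0:ℝ) < |I₀| + 1 := by positivity
      have h1 : |α - α₀| * |I₀| ≤ (m/(|I₀|+1)) * |I₀| :=
        mul_le_mul_of_nonneg_right (le_of_lt hdist) (abs_nonneg _)
      have h2 : (m/(|I₀|+1)) * |I₀| < m := by
        rw [div_mul_eq_mul_div, div_lt_iff₀ hI1]
        nlinarith [abs_nonneg I₀]
      linarith
    have hprod := abs_lt.1 (by rw [abs_mul]; exact habs : |(α - α₀) * I₀| < m)
    have hfA : -(X α₀ - ee/2)^3/3 + ((1 - ρ^2/2) - 1/γ) * (X α₀ - ee/2)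
        + (α * I₀ - β/γ) > 0 := by
      have heq : -(X α₀ - ee/2)^3/3 + ((1 - ρ^2/2) - 1/γ) * (X α₀ - ee/2) + (α * I₀ - β/γ)
          = mA + (α - α₀) * I₀ := by rw [hmA]; ring
      rw [heq]
      linarith [hprod.1]
    have hfB : -(X α₀ + ee/2)^3/3 + ((1 - ρ^2/2) - 1/γ) * (X α₀ + ee/2)
        + (α * I₀ - β/γ) < 0 := by
      have heq : -(X α₀ + ee/2)^3/3 + ((1 - ρ^2/2) - 1/γ) * (X α₀ + ee/2) + (α * I₀ - β/γ)
          = mB + (α - α₀) * I₀ := by rw [hmB]; ring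
      rw [heq]
      linarith [hprod.2]
    have hA : X α₀ - ee/2 ≤ X α := by
      by_contra hcon
      push_neg at hcon
      linarith [(hsign α hα _).2 hcon]
    have hB : X α ≤ X α₀ + ee/2 := by
      by_contra hcon
      push_neg at hcon
      linarith [(hsign α hα _).1 hcon]
    have : |X α - X α₀| ≤ ee/2 := abs_le.2 ⟨by linarith, by linarith⟩
    linarith
  have contX : ContinuousOn X (Icc (0:ℝ) 1) := fun α hα => hXc α hα
  have contY : ContinuousOn Y (Icc (0:ℝ) 1) := by
    apply ContinuousOn.congr (f := fun α => (X α + β)/γ)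
    · exact (contX.add continuousOn_const).div_const γ
    · intro α hα; exact hYf α hα
  -- slope formula
  have hslope : ∀ α₀ ∈ Icc (0:ℝ) 1, ∀ α ∈ Icc (0:ℝ) 1, α ≠ α₀ →
      slope X α₀ α
        = I₀ / ((X α^2 + X α * X α₀ + X α₀^2)/3 - (1 - ρ^2/2) + 1/γ) := by
    intro α₀ hα₀ α hα hne
    have hEge : (X α^2 + X α * X α₀ + X α₀^2)/3 - (1 - ρ^2/2) + 1/γ ≥ 1/γ := by
      have := hS α hα α₀ hα₀; linarith
    have hE0 : (X α^2 + X α * X α₀ + X α₀^2)/3 - (1 - ρ^2/2) + 1/γ ≠ 0 :=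
      ne_of_gt (lt_of_lt_of_le hγinv hEge)
    have hid : (X α - X α₀) * ((X α^2 + X α * X α₀ + X α₀^2)/3 - (1 - ρ^2/2) + 1/γ)
        = (α - α₀) * I₀ := by
      linear_combination (hg α₀ hα₀) - (hg α hα)
    rw [slope_def_field, div_eq_div_iff (sub_ne_zero.2 hne) hE0]
    linear_combination hid
  -- tendsto of the quotient within Icc
  have hEcont : ∀ α₀ ∈ Icc (0:ℝ) 1,
      Tendsto (fun α => I₀ / ((X α^2 + X α * X α₀ + X α₀^2)/3 - (1 - ρ^2/2) + 1/γ))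
        (𝓝[Icc (0:ℝ) 1] α₀) (𝓝 (I₀ / (X α₀ ^ 2 - 1 + 1 / γ + ρ ^ 2 / 2))) := by
    intro α₀ hα₀
    have hXt : Tendsto X (𝓝[Icc (0:ℝ) 1] α₀) (𝓝 (X α₀)) := hXc α₀ hα₀
    have hDt : Tendsto (fun α => (X α^2 + X α * X α₀ + X α₀^2)/3 - (1 - ρ^2/2) + 1/γ)
        (𝓝[Icc (0:ℝ) 1] α₀)
        (𝓝 (((X α₀)^2 + X α₀ * X α₀ + (X α₀)^2)/3 - (1 - ρ^2/2) + 1/γ)) := by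
      exact (((((hXt.pow 2).add (hXt.mul tendsto_const_nhds)).add
        tendsto_const_nhds).div_const 3).sub tendsto_const_nhds).add tendsto_const_nhds
    have hval : ((X α₀)^2 + X α₀ * X α₀ + (X α₀)^2)/3 - (1 - ρ^2/2) + 1/γ
        = X α₀ ^ 2 - 1 + 1 / γ + ρ ^ 2 / 2 := by ring
    rw [hval] at hDt
    have hne0 : X α₀ ^ 2 - 1 + 1 / γ + ρ ^ 2 / 2 ≠ 0 := by
      have := keyL α₀ hα₀; intro h; nlinarith
    exact tendsto_const_nhds.div hDt hne0
  have hDW : ∀ α₀ ∈ Icc (0:ℝ) 1,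
      HasDerivWithinAt X (I₀ / (X α₀ ^ 2 - 1 + 1 / γ + ρ ^ 2 / 2)) (Icc (0:ℝ) 1) α₀ := by
    intro α₀ hα₀
    rw [hasDerivWithinAt_iff_tendsto_slope]
    have hsub : 𝓝[Icc (0:ℝ) 1 \ {α₀}] α₀ ≤ 𝓝[Icc (0:ℝ) 1] α₀ :=
      nhdsWithin_mono _ diff_subset
    refine Filter.Tendsto.congr' ?_ ((hEcont α₀ hα₀).mono_left hsub)
    filter_upwards [self_mem_nhdsWithin] with α hα
    exact (hslope α₀ hα₀ α hα.1 hα.2).symm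
  have hdiff : ∀ α ∈ Icc (0:ℝ) 1, DifferentiableWithinAt ℝ X (Icc (0:ℝ) 1) α ∧
      DifferentiableWithinAt ℝ Y (Icc (0:ℝ) 1) α := by
    intro α hα
    refine ⟨(hDW α hα).differentiableWithinAt, ?_⟩
    have h1 : DifferentiableWithinAt ℝ (fun a => (X a + β)/γ) (Icc (0:ℝ) 1) α :=
      ((hDW α hα).differentiableWithinAt.add_const β).div_const γ
    exact h1.congr (fun a ha => hYf a ha) (hYf α hα)
  refine ⟨keyL, contX, contY, hdiff, ?_, ?_⟩
  · intro α₀ hα₀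
    have hmem : α₀ ∈ Icc (0:ℝ) 1 := Ioo_subset_Icc_self hα₀
    have hX' : HasDerivAt X (I₀ / (X α₀ ^ 2 - 1 + 1 / γ + ρ ^ 2 / 2)) α₀ :=
      (hDW α₀ hmem).hasDerivAt (Icc_mem_nhds hα₀.1 hα₀.2)
    have hYe : Y =ᶠ[𝓝 α₀] fun a => (1/γ) * X a + β/γ := by
      filter_upwards [Icc_mem_nhds hα₀.1 hα₀.2] with a ha
      rw [hYf a ha]
      field_simp
    have hY' : HasDerivAt Y ((1/γ) * (I₀ / (X α₀ ^ 2 - 1 + 1 / γ + ρ ^ 2 / 2))) α₀ :=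
      ((hX'.const_mul (1/γ)).add_const (β/γ)).congr_of_eventuallyEq hYe
    exact ⟨_, _, hX', hY', rfl, rfl⟩
  · intro α hα
    refine ⟨?_, hγinv⟩
    have := key α hα
    linarith
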